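/- Uniqueness of the length function: let E be a Euclidean space (e.g. EuclideanSpace ℝ (Fin 3)) and let ℓ : E → E → ℝ satisfy: (1) ℓ O E₀ = 1 for some fixed reference pair with dist O E₀ = 1; (2) ℓ A B > 0 whenever A ≠ B; (3) if dist A B = dist C D then ℓ A B = ℓ C D (congruent segments have equal length); (4) if B lies strictly between A and C then ℓ A C = ℓ A B + ℓ B C. Then ℓ A B = dist A B for all A ≠ B. -/
import Mathlib


/-- Uniqueness of the length function: a function assigning to each pair of
distinct points a positive real number, which is invariant under congruence
of segments, additive under subdivision of a segment by an interior point,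
and equal to `1` on a fixed reference segment of unit distance, coincides
with the Euclidean distance. -/
theorem length_function_unique
    {E : Type*} [NormedAddCommGroup E] [InnerProductSpace ℝ E]
    (ℓ : E → E → ℝ) (O E₀ : E) (hOE : dist O E₀ = 1)
    (h1 : ℓ O E₀ = 1)
    (h2 : ∀ A B : E, A ≠ B → 0 < ℓ A B)
    (h3 : ∀ A B C D : E, dist A B = dist C D → ℓ A B = ℓ C D)
    (h4 : ∀ A B C : E, Sbtw ℝ A B C → ℓ A C = ℓ A B + ℓ B C) :
    ∀ A B : E, A ≠ B → ℓ A B = dist A B := by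
  set u : E := E₀ - O with hu
  have hnu : ‖u‖ = 1 := by rw [hu, ← dist_eq_norm, dist_comm]; exact hOE
  have hu0 : u ≠ 0 := by intro h; rw [h, norm_zero] at hnu; norm_num at hnu
  set P : ℝ → E := fun t => O + t • u with hP
  have hdist : ∀ s t : ℝ, dist (P s) (P t) = |s - t| := by
    intro s t
    have hsub : P s - P t = (s - t) • u := by rw [hP]; simp only; rw [sub_smul]; abel
    rw [dist_eq_norm, hsub, norm_smul, hnu, mul_one, Real.norm_eq_abs]
  have hdO : ∀ t : ℝ, 0 ≤ t → dist O (P t) = t := by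
    intro t ht
    have : O = P 0 := by simp [hP]
    rw [this, hdist, zero_sub, abs_neg, abs_of_nonneg ht]
  have hPne : ∀ t : ℝ, 0 < t → O ≠ P t := by
    intro t ht h
    have := hdO t ht.le
    rw [← h, dist_self] at this
    exact ht.ne this
  set f : ℝ → ℝ := fun t => ℓ O (P t) with hf
  have key : ∀ A B : E, A ≠ B → ℓ A B = f (dist A B) := by
    intro A B hAB
    exact h3 _ _ _ _ (by rw [hdO _ dist_nonneg])
  have hf1 : f 1 = 1 := by
    rw [hf]; simp only
    rw [h3 O (P 1) O E₀ (by rw [hdO 1 zero_le_one, hOE]), h1]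
  have hfpos : ∀ t : ℝ, 0 < t → 0 < f t := fun t ht => h2 _ _ (hPne t ht)
  -- additivity
  have hadd : ∀ s t : ℝ, 0 < s → 0 < t → f (s + t) = f s + f t := by
    intro s t hs ht
    have hst : (0:ℝ) < s + t := by linarith
    have hmid : P s = AffineMap.lineMap O (P (s + t)) (s / (s + t)) := by
      rw [hP]; simp only [AffineMap.lineMap_apply_module]
      rw [smul_add, smul_smul, smul_sub]
      rw [div_mul_cancel₀ _ hst.ne']
      module
    have hsb : Sbtw ℝ O (P s) (P (s + t)) := by
      rw [hmid]
      refine sbtw_lineMap_iff.2 ⟨hPne _ hst, ?_, ?_⟩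
      · positivity
      · rw [div_lt_one hst]; linarith
    have := h4 _ _ _ hsb
    rw [hf]; simp only
    rw [this]
    congr 1
    refine h3 _ _ _ _ ?_
    rw [hdist, hdO t ht.le]
    rw [show s - (s + t) = -t by ring, abs_neg, abs_of_pos ht]
  -- f (n * x) = n * f x
  have hnat : ∀ (n : ℕ) (x : ℝ), 0 < x → f ((n + 1) * x) = (n + 1) * f x := by
    intro n
    induction n with
    | zero => intro x hx; simp
    | succ n ih =>
      intro x hx
      push_cast
      rw [show ((n:ℝ) + 1 + 1) * x = ((n:ℝ) + 1) * x + x by ring,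
        hadd _ _ (by positivity) hx, ih x hx]
      ring
  have hmul : ∀ (m : ℕ), 0 < m → ∀ x : ℝ, 0 < x → f (m * x) = m * f x := by
    intro m hm x hx
    obtain ⟨k, rfl⟩ := Nat.exists_eq_succ_of_ne_zero hm.ne'
    push_cast
    exact hnat k x hx
  -- f q = q for positive rationals
  have hrat : ∀ q : ℚ, 0 < q → f q = q := by
    intro q hq
    have hd : (0:ℝ) < (q.den : ℝ) := by exact_mod_cast q.pos
    have hn : 0 < q.num := Rat.num_pos.2 hq
    have hx : (0:ℝ) < (q : ℝ) := by exact_mod_cast hq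
    have e1 : f ((q.den : ℝ) * (q : ℝ)) = (q.den : ℝ) * f q := hmul q.den q.pos _ hx
    have e2 : (q.den : ℝ) * (q : ℝ) = (q.num : ℝ) := by
      rw [Rat.cast_def]; field_simp
    have e3 : f ((q.num : ℝ)) = (q.num : ℝ) := by
      have := hmul q.num.toNat (by omega) 1 one_pos
      rw [mul_one, hf1, mul_one] at this
      rwa [show ((q.num.toNat : ℕ) : ℝ) = (q.num : ℝ) by
        exact_mod_cast Int.toNat_of_nonneg hn.le] at this
    rw [e2, e3] at e1
    have : f (q : ℝ) = (q.num : ℝ) / (q.den : ℝ) := by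
      rw [eq_div_iff hd.ne']; linarith
    rw [this, Rat.cast_def]
  -- monotonicity
  have hmono : ∀ s t : ℝ, 0 < s → s < t → f s < f t := by
    intro s t hs hst
    have : f t = f s + f (t - s) := by
      have := hadd s (t - s) hs (by linarith)
      rwa [add_sub_cancel] at this
    rw [this]
    have := hfpos (t - s) (by linarith)
    linarith
  -- f x = x for all positive x by squeeze
  have hfx : ∀ x : ℝ, 0 < x → f x = x := by
    intro x hx
    by_contra hne
    rcases lt_or_gt_of_ne hne with h | h
    · -- f x < x : pick rational in (f x ⊔ 0, x)... need f x vs rational below x but above f x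
      obtain ⟨q, hq1, hq2⟩ := exists_rat_btwn (lt_of_lt_of_le h le_rfl : f x < x)
      rcases le_or_gt (q:ℝ) 0 with hq0 | hq0
      · have := hfpos x hx; linarith
      · have hq0' : 0 < q := by exact_mod_cast hq0
        have := hmono q x (by exact_mod_cast hq0) hq2
        rw [hrat q hq0'] at this
        linarith
    · obtain ⟨q, hq1, hq2⟩ := exists_rat_btwn h
      have hq0 : 0 < q := by
        have : (0:ℝ) < q := lt_trans hx hq1
        exact_mod_cast this
      have := hmono x q hx hq1
      rw [hrat q hq0] at this
      linarith
  intro A B hAB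
  rw [key A B hAB, hfx _ (dist_pos.2 hAB)]
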